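/- For a function f on ℝ² lying in L¹ ∩ L^p with p > 2, the Biot-Savart convolution K ∗ f, where K(x) = x^⊥/(2π|x|²), satisfies ‖K ∗ f‖_{L^∞(ℝ²)} ≤ C_p ‖f‖_{L¹}^{1 - p'/2} ‖f‖_{L^p}^{p'/2}, where p' = p/(p-1) and C_p depends only on p. -/

import Mathlib

open MeasureTheory Real

/-- The Biot-Savart kernel `K(x) = x^⊥ / (2π|x|²)` on ℝ². -/
noncomputable def biotSavartK (x : EuclideanSpace ℝ (Fin 2)) : EuclideanSpace ℝ (Fin 2) :=
  (2 * π * ‖x‖ ^ 2)⁻¹ • (WithLp.toLp 2 ![-x 1, x 0] : EuclideanSpace ℝ (Fin 2))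

open Metric
open scoped ENNReal

local notation "E2" => EuclideanSpace ℝ (Fin 2)

lemma norm_biotSavartK (w : E2) : ‖biotSavartK w‖ = (2 * π * ‖w‖)⁻¹ := by
  rw [biotSavartK, norm_smul]
  simp only [EuclideanSpace.norm_eq, Fin.sum_univ_two, Matrix.cons_val_zero, Matrix.cons_val_one,
    Matrix.head_cons, Real.norm_eq_abs, sq_abs, norm_inv]
  have h : (-w 1)^2 + w 0^2 = w 0^2 + w 1^2 := by ring
  rw [h]
  set s := √(w 0^2 + w 1^2) with hs
  have hs0 : 0 ≤ s := Real.sqrt_nonneg _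
  rcases eq_or_lt_of_le hs0 with h0 | h0
  · rw [← h0]; simp
  · rw [abs_of_pos (by positivity)]
    field_simp

/-- dyadic bound for `∫_{B_R} (2π|z|)^{-a} dz`, `1 < a < 2`. -/
lemma kernel_ball_bound (a R : ℝ) (ha1 : 1 < a) (ha2 : a < 2) (hR : 0 < R) :
    ∫⁻ z in ball (0:E2) R, (ENNReal.ofReal ((2 * π * ‖z‖)⁻¹)) ^ a ≤
      (ENNReal.ofReal ((2*π)^(-a) * 2^a) * (1 - ENNReal.ofReal ((2:ℝ)^(a-2)))⁻¹ *
        volume (ball (0:E2) 1)) * ENNReal.ofReal (R^(2-a)) := by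
  classical
  set h : E2 → ℝ≥0∞ := fun z => (ENNReal.ofReal ((2 * π * ‖z‖)⁻¹)) ^ a with hh
  set S : ℕ → Set E2 := fun n => ball (0:E2) (R * (2⁻¹:ℝ)^n) \ ball 0 (R * (2⁻¹:ℝ)^(n+1)) with hS
  -- step 1: remove the origin
  have h0 : (ball (0:E2) R : Set E2) =ᵐ[volume] (ball (0:E2) R \ {0} : Set E2) :=
    (diff_null_ae_eq_self (measure_singleton 0)).symm
  rw [setLIntegral_congr h0]
  -- step 2: cover by shells
  have hcover : (ball (0:E2) R \ {0} : Set E2) ⊆ ⋃ n, S n := by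
    rintro z ⟨hz1, hz2⟩
    have hz : ‖z‖ < R := mem_ball_zero_iff.1 hz1
    have hzpos : 0 < ‖z‖ := norm_pos_iff.2 (by simpa using hz2)
    have hex : ∃ m : ℕ, R * (2⁻¹:ℝ)^(m+1) ≤ ‖z‖ := by
      obtain ⟨m, hm⟩ := exists_pow_lt_of_lt_one (x := ‖z‖ / R) (y := (2⁻¹:ℝ))
        (by positivity) (by norm_num)
      refine ⟨m, ?_⟩
      have : (2⁻¹:ℝ)^(m+1) ≤ (2⁻¹:ℝ)^m :=
        pow_le_pow_of_le_one (by norm_num) (by norm_num) (Nat.le_succ m)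
      have := this.trans hm.le
      calc R * (2⁻¹:ℝ)^(m+1) ≤ R * (‖z‖/R) := by
            apply mul_le_mul_of_nonneg_left _ hR.le
            exact le_trans ‹(2⁻¹:ℝ)^(m+1) ≤ (2⁻¹:ℝ)^m› hm.le
        _ = ‖z‖ := by field_simp
    refine Set.mem_iUnion.2 ⟨Nat.find hex, mem_ball_zero_iff.2 ?_,
      fun hc => absurd (mem_ball_zero_iff.1 hc) (not_lt.2 (Nat.find_spec hex))⟩
    cases hnf : Nat.find hex with
    | zero => simpa using hz
    | succ k =>
        have hmin := Nat.find_min hex (m := k) (by omega)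
        exact lt_of_not_ge hmin
  refine le_trans (lintegral_mono_set hcover) ?_
  refine le_trans (lintegral_iUnion_le _ _) ?_
  -- step 3: bound each shell
  have key : ∀ n : ℕ, ((2*π*(R*(2⁻¹:ℝ)^(n+1)))⁻¹)^a * (R*(2⁻¹:ℝ)^n)^2
      = (2*π)^(-a) * 2^a * R^(2-a) * ((2:ℝ)^(a-2))^n := by
    intro n
    have h2 : ∀ m : ℕ, ((2:ℝ)⁻¹)^m = (2:ℝ)^(-(m:ℝ)) := fun m => by
      rw [Real.rpow_neg (by norm_num), Real.rpow_natCast, inv_pow]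
    have h2pi : (0:ℝ) < 2*π := by positivity
    rw [h2, h2]
    rw [Real.inv_rpow (by positivity), ← Real.rpow_neg (by positivity)]
    rw [Real.mul_rpow h2pi.le (by positivity), Real.mul_rpow hR.le (by positivity)]
    rw [← Real.rpow_mul (by norm_num : (0:ℝ) ≤ 2)]
    rw [mul_pow, ← Real.rpow_natCast ((2:ℝ)^(-(n:ℝ))) 2, ← Real.rpow_mul (by norm_num : (0:ℝ) ≤ 2)]
    rw [← Real.rpow_natCast R 2]
    rw [← Real.rpow_natCast ((2:ℝ)^(a-2)) n, ← Real.rpow_mul (by norm_num : (0:ℝ) ≤ 2)]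
    push_cast
    rw [show (2*π) ^ (-a) * (R ^ (-a) * 2 ^ (-((n:ℝ) + 1) * -a)) * (R ^ (2:ℝ) * 2 ^ (-(n:ℝ) * 2))
        = (2*π) ^ (-a) * ((R ^ (-a) * R ^ (2:ℝ)) * (2 ^ (-((n:ℝ) + 1) * -a) * 2 ^ (-(n:ℝ) * 2))) by ring]
    rw [← Real.rpow_add hR, ← Real.rpow_add (by norm_num : (0:ℝ) < 2)]
    rw [show (2*π)^(-a) * 2^a * R^(2-a) * ((2:ℝ)^((a-2)*(n:ℝ)))
        = (2*π)^(-a) * (R^(2-a) * (2^a * (2:ℝ)^((a-2)*(n:ℝ)))) by ring]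
    rw [← Real.rpow_add (by norm_num : (0:ℝ) < 2)]
    ring_nf
  have hshell : ∀ n : ℕ, ∫⁻ z in S n, h z ≤
      (ENNReal.ofReal ((2*π)^(-a) * 2^a * R^(2-a)) * ENNReal.ofReal ((2:ℝ)^(a-2))^n) *
        volume (ball (0:E2) 1) := by
    intro n
    have hrn : (0:ℝ) < R * (2⁻¹:ℝ)^(n+1) := by positivity
    have hb : ∀ z ∈ S n, h z ≤ ENNReal.ofReal ((2*π*(R*(2⁻¹:ℝ)^(n+1)))⁻¹) ^ a := by
      intro z hz
      have hz1 : R * (2⁻¹:ℝ)^(n+1) ≤ ‖z‖ :=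
        not_lt.1 (fun hc => hz.2 (mem_ball_zero_iff.2 hc))
      refine ENNReal.rpow_le_rpow (ENNReal.ofReal_le_ofReal ?_) (by linarith)
      exact inv_anti₀ (by positivity) (by nlinarith [Real.pi_pos])
    have hmS : MeasurableSet (S n) := measurableSet_ball.diff measurableSet_ball
    calc ∫⁻ z in S n, h z
        ≤ ∫⁻ _ in S n, ENNReal.ofReal ((2*π*(R*(2⁻¹:ℝ)^(n+1)))⁻¹) ^ a ∂volume :=
          setLIntegral_mono' hmS hb
      _ = ENNReal.ofReal ((2*π*(R*(2⁻¹:ℝ)^(n+1)))⁻¹) ^ a * volume (S n) :=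
          setLIntegral_const _ _
      _ ≤ ENNReal.ofReal ((2*π*(R*(2⁻¹:ℝ)^(n+1)))⁻¹) ^ a *
            volume (ball (0:E2) (R*(2⁻¹:ℝ)^n)) :=
          mul_le_mul_right (measure_mono Set.diff_subset) _
      _ = (ENNReal.ofReal ((2*π)^(-a) * 2^a * R^(2-a)) * ENNReal.ofReal ((2:ℝ)^(a-2))^n) *
            volume (ball (0:E2) 1) := by
          rw [Measure.addHaar_ball _ _ (by positivity : (0:ℝ) ≤ R*(2⁻¹:ℝ)^n)]
          rw [ENNReal.ofReal_rpow_of_pos (by positivity)]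
          rw [finrank_euclideanSpace_fin]
          rw [← mul_assoc, ← ENNReal.ofReal_mul (by positivity), key n]
          rw [← ENNReal.ofReal_pow (by positivity), ← ENNReal.ofReal_mul (by positivity)]
  refine le_trans (ENNReal.tsum_le_tsum hshell) ?_
  rw [ENNReal.tsum_mul_right, ENNReal.tsum_mul_left, ENNReal.tsum_geometric]
  rw [ENNReal.ofReal_mul (by positivity)]
  ring_nf
  exact le_refl _

lemma bs_arith (a A B c₂ : ℝ) (ha1 : 1 < a) (ha2 : a < 2) (hA : 0 < A) (hB : 0 < B) (hc : 0 ≤ c₂) :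
    B * (c₂ * ((A/B)^(a/2))^((2-a)*(1/a))) + (2*π*((A/B)^(a/2)))⁻¹ * A
      = (c₂ + (2*π)⁻¹) * A^(1-a/2) * B^(a/2) := by
  have hAB : (0:ℝ) < A / B := div_pos hA hB
  rw [← Real.rpow_mul hAB.le]
  rw [show (a/2) * ((2-a)*(1/a)) = 1 - a/2 by field_simp]
  rw [mul_inv, ← Real.rpow_neg hAB.le]
  rw [Real.div_rpow hA.le hB.le, Real.div_rpow hA.le hB.le]
  have hx1 : (0:ℝ) < A^(a/2) := by positivity
  have hy1 : (0:ℝ) < B^(a/2) := by positivity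
  rw [show (1:ℝ) - a/2 = (2-a)/2 by ring]
  have hAeq : A^((2-a)/2) = A / A^(a/2) := by
    rw [eq_div_iff hx1.ne', ← Real.rpow_add hA, show (2-a)/2 + a/2 = (1:ℝ) by ring, Real.rpow_one]
  have hBeq : B^((2-a)/2) = B / B^(a/2) := by
    rw [eq_div_iff hy1.ne', ← Real.rpow_add hB, show (2-a)/2 + a/2 = (1:ℝ) by ring, Real.rpow_one]
  rw [Real.rpow_neg hA.le, Real.rpow_neg hB.le, hAeq, hBeq]
  field_simp

/-- for `f ∈ L¹ ∩ L^p`, `p > 2`, one has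
`‖K ∗ f‖_∞ ≤ C_p ‖f‖₁^{1-p'/2} ‖f‖_p^{p'/2}`, `p' = p/(p-1)`. -/
theorem stmt_5 (p : ℝ) (hp : 2 < p) :
    ∃ C : ℝ, 0 < C ∧ ∀ f : EuclideanSpace ℝ (Fin 2) → ℝ,
      MemLp f 1 volume → MemLp f (ENNReal.ofReal p) volume →
      ∀ x : EuclideanSpace ℝ (Fin 2),
        ‖∫ y, f y • biotSavartK (x - y)‖ ≤
          C * (eLpNorm f 1 volume).toReal ^ (1 - (p / (p - 1)) / 2) *
            (eLpNorm f (ENNReal.ofReal p) volume).toReal ^ ((p / (p - 1)) / 2) := by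
  set a := p / (p - 1) with ha
  have hp1 : (1:ℝ) < p := by linarith
  have hp1' : (0:ℝ) < p - 1 := by linarith
  have ha1 : 1 < a := by
    rw [ha]; rw [lt_div_iff₀ hp1']; linarith
  have ha2 : a < 2 := by
    rw [ha, div_lt_iff₀ hp1']; linarith
  have hpq : p.HolderConjugate a := (Real.holderConjugate_iff_eq_conjExponent hp1).2 ha
  -- constants
  set V : ℝ≥0∞ := volume (ball (0:E2) 1) with hV
  set Cker : ℝ≥0∞ := ENNReal.ofReal ((2*π)^(-a) * 2^a) *
      (1 - ENNReal.ofReal ((2:ℝ)^(a-2)))⁻¹ * V with hCker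
  have hgeom : ENNReal.ofReal ((2:ℝ)^(a-2)) < 1 := by
    rw [← ENNReal.ofReal_one]
    exact ENNReal.ofReal_lt_ofReal_iff_of_nonneg (by positivity) |>.2
      (Real.rpow_lt_one_of_one_lt_of_neg one_lt_two (by linarith))
  have hCkerTop : Cker ≠ ∞ := by
    rw [hCker]
    refine ENNReal.mul_ne_top (ENNReal.mul_ne_top ENNReal.ofReal_ne_top ?_) ?_
    · exact ENNReal.inv_ne_top.2 (tsub_pos_of_lt hgeom).ne'
    · exact measure_ball_lt_top.ne
  set c₂ : ℝ := (Cker ^ (1/a)).toReal with hc₂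
  have hc₂0 : 0 ≤ c₂ := ENNReal.toReal_nonneg
  refine ⟨c₂ + (2*π)⁻¹, by positivity, ?_⟩
  intro f hf1 hfp x
  set A' := eLpNorm f 1 volume with hA'
  set B' := eLpNorm f (ENNReal.ofReal p) volume with hB'
  have hA'top : A' ≠ ∞ := hf1.eLpNorm_ne_top
  have hB'top : B' ≠ ∞ := hfp.eLpNorm_ne_top
  by_cases hA0 : A' = 0
  · -- f is a.e. zero
    have hf0 : f =ᵐ[volume] 0 := (eLpNorm_eq_zero_iff hf1.aestronglyMeasurable one_ne_zero).1 hA0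
    have : (∫ y, f y • biotSavartK (x - y)) = 0 := by
      rw [integral_congr_ae (g := fun _ => (0:E2)) ?_, integral_zero]
      filter_upwards [hf0] with y hy
      simp [hy]
    rw [this, norm_zero, hA0]
    have h0' : (0:ℝ≥0∞).toReal ^ (1 - a/2) = 0 := by
      rw [ENNReal.toReal_zero, Real.zero_rpow (by linarith : (1:ℝ) - a/2 ≠ 0)]
    rw [h0', mul_zero, zero_mul]
  · have hB0 : B' ≠ 0 := by
      intro hB0
      exact hA0 (by
        have hf0 : f =ᵐ[volume] 0 := (eLpNorm_eq_zero_iff hfp.aestronglyMeasurable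
          (by simp [ENNReal.ofReal_eq_zero]; linarith)).1 hB0
        rw [hA', eLpNorm_congr_ae hf0, eLpNorm_zero])
    set A := A'.toReal with hA
    set B := B'.toReal with hB
    have hApos : 0 < A := ENNReal.toReal_pos hA0 hA'top
    have hBpos : 0 < B := ENNReal.toReal_pos hB0 hB'top
    set R : ℝ := (A/B)^(a/2) with hR
    have hRpos : 0 < R := by positivity
    -- the main lintegral bound
    set F : E2 → ℝ≥0∞ := fun y => ENNReal.ofReal ‖f y‖ with hF
    set G : E2 → ℝ≥0∞ := fun w => ENNReal.ofReal ((2 * π * ‖w‖)⁻¹) with hG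
    have hFmeas : AEMeasurable F volume :=
      ENNReal.measurable_ofReal.comp_aemeasurable hf1.aestronglyMeasurable.norm.aemeasurable
    have hGmeas : Measurable (fun y : E2 => G (x - y)) := by
      apply ENNReal.measurable_ofReal.comp
      exact ((measurable_const.mul (measurable_const.sub measurable_id).norm)).inv
    -- step 1 : pointwise identity
    have hpt : ∀ y : E2, ENNReal.ofReal ‖f y • biotSavartK (x - y)‖ = F y * G (x - y) := by
      intro y
      rw [norm_smul, ENNReal.ofReal_mul (norm_nonneg _), norm_biotSavartK]
    -- near field
    have hnear : ∫⁻ y in ball x R, F y * G (x - y) ≤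
        B' * (ENNReal.ofReal c₂ * ENNReal.ofReal (R ^ ((2-a)*(1/a)))) := by
      have hHolder := ENNReal.lintegral_mul_le_Lp_mul_Lq (volume.restrict (ball x R)) hpq
        hFmeas.restrict hGmeas.aemeasurable.restrict
      refine le_trans hHolder (mul_le_mul' ?_ ?_)
      · -- Lp factor ≤ B'
        have h1 : ∫⁻ y in ball x R, F y ^ p ∂volume ≤ ∫⁻ y, F y ^ p ∂volume :=
          setLIntegral_le_lintegral _ _
        have h2 : B' = (∫⁻ y, F y ^ p ∂volume) ^ (1/p) := by
          rw [hB', eLpNorm_eq_lintegral_rpow_enorm_toReal (by simp [ENNReal.ofReal_eq_zero]; linarith)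
            ENNReal.ofReal_ne_top]
          rw [ENNReal.toReal_ofReal (by linarith)]
          congr 1
          refine lintegral_congr fun y => ?_
          simp [hF, ← ofReal_norm_eq_enorm]
        rw [h2]
        exact ENNReal.rpow_le_rpow h1 (by positivity)
      · -- Lq factor
        have hchange : ∫⁻ y in ball x R, G (x - y) ^ a ∂volume
            = ∫⁻ z in ball (0:E2) R, G z ^ a ∂volume := by
          have hmp : MeasurePreserving (fun y : E2 => x - y) volume volume :=
            Measure.measurePreserving_sub_left volume x
          have hemb : MeasurableEmbedding (fun y : E2 => x - y) :=
            (MeasurableEquiv.subLeft x).measurableEmbedding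
          have hpre : (fun y : E2 => x - y) ⁻¹' (ball (0:E2) R) = ball x R := by
            ext y
            simp only [Set.mem_preimage, mem_ball, dist_eq_norm, sub_zero]
            rw [norm_sub_rev]
          rw [← hpre]
          exact hmp.setLIntegral_comp_preimage_emb hemb (fun z => G z ^ a) _
        rw [hchange]
        have hker := kernel_ball_bound a R ha1 ha2 hRpos
        refine le_trans (ENNReal.rpow_le_rpow hker (by positivity)) ?_
        rw [ENNReal.mul_rpow_of_nonneg _ _ (by positivity)]
        apply mul_le_mul'
        · rw [← hCker]
          rw [show (1:ℝ)/a = 1/a from rfl]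
          rw [hc₂, ENNReal.ofReal_toReal (ENNReal.rpow_ne_top_of_nonneg (by positivity) hCkerTop)]
        · rw [ENNReal.ofReal_rpow_of_pos (by positivity)]
          rw [← Real.rpow_mul hRpos.le]
    -- far field
    have hfar : ∫⁻ y in (ball x R)ᶜ, F y * G (x - y) ≤
        ENNReal.ofReal ((2*π*R)⁻¹) * A' := by
      have hb : ∀ y ∈ (ball x R)ᶜ, F y * G (x - y) ≤ F y * ENNReal.ofReal ((2*π*R)⁻¹) := by
        intro y hy
        have hyx : R ≤ ‖x - y‖ := by
          rw [norm_sub_rev, ← dist_eq_norm]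
          exact not_lt.1 (fun hc => hy (mem_ball.2 (by rwa [dist_eq_norm] at hc ⊢)))
        refine mul_le_mul_right (ENNReal.ofReal_le_ofReal ?_) _
        exact inv_anti₀ (by positivity) (by nlinarith [Real.pi_pos])
      refine le_trans (setLIntegral_mono' measurableSet_ball.compl hb) ?_
      rw [lintegral_mul_const'' _ hFmeas.restrict, mul_comm]
      refine mul_le_mul_right ?_ _
      refine le_trans (setLIntegral_le_lintegral _ _) (le_of_eq ?_)
      rw [hA', eLpNorm_one_eq_lintegral_enorm]
      exact lintegral_congr fun y => by simp [hF, ← ofReal_norm_eq_enorm]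
    -- combine
    have htotal : ∫⁻ y, F y * G (x - y) ≤
        ENNReal.ofReal ((c₂ + (2*π)⁻¹) * A^(1-a/2) * B^(a/2)) := by
      rw [← lintegral_add_compl (fun y => F y * G (x - y)) measurableSet_ball (A := ball x R)]
      refine le_trans (add_le_add hnear hfar) ?_
      have hB'eq : B' = ENNReal.ofReal B := (ENNReal.ofReal_toReal hB'top).symm
      have hA'eq2 : A' = ENNReal.ofReal A := (ENNReal.ofReal_toReal hA'top).symm
      rw [hB'eq, hA'eq2, ← ENNReal.ofReal_mul (by positivity), ← ENNReal.ofReal_mul (by positivity),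
        ← ENNReal.ofReal_mul (by positivity), ← ENNReal.ofReal_add (by positivity) (by positivity)]
      refine ENNReal.ofReal_le_ofReal (le_of_eq ?_)
      rw [hR]
      exact bs_arith a A B c₂ ha1 ha2 hApos hBpos hc₂0
    calc ‖∫ y, f y • biotSavartK (x - y)‖
        ≤ (∫⁻ y, ENNReal.ofReal ‖f y • biotSavartK (x - y)‖).toReal :=
          norm_integral_le_lintegral_norm _
      _ = (∫⁻ y, F y * G (x - y)).toReal := by rw [lintegral_congr hpt]
      _ ≤ (ENNReal.ofReal ((c₂ + (2*π)⁻¹) * A^(1-a/2) * B^(a/2))).toReal :=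
          ENNReal.toReal_mono ENNReal.ofReal_ne_top htotal
      _ = (c₂ + (2*π)⁻¹) * A^(1-a/2) * B^(a/2) := ENNReal.toReal_ofReal (by positivity)
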